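/- Let X and Y be Hausdorff topological spaces and f : X → Y an open surjective map. Then the Cantor-Bendixson rank of X is at least the Cantor-Bendixson rank of Y. -/

import Mathlib

open Filter

/-- The `o`-th Cantor–Bendixson derivative of the space `X`: at successors remove isolated
points (keep only accumulation points), at limits take intersections. -/
noncomputable def cbDeriv (X : Type*) [TopologicalSpace X] (o : Ordinal) : Set X :=
  Ordinal.limitRecOn o Set.univ
    (fun _ s => {x | x ∈ s ∧ AccPt x (𝓟 s)})
    (fun o _ ih => ⋂ (o' : Ordinal) (h : o' < o), ih o' h)

lemma cbDeriv_zero (X : Type*) [TopologicalSpace X] : cbDeriv X 0 = Set.univ :=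
  Ordinal.limitRecOn_zero _ _ _

lemma cbDeriv_succ (X : Type*) [TopologicalSpace X] (o : Ordinal) :
    cbDeriv X (Order.succ o) = {x | x ∈ cbDeriv X o ∧ AccPt x (𝓟 (cbDeriv X o))} :=
  Ordinal.limitRecOn_succ _ _ _ _

lemma cbDeriv_limit (X : Type*) [TopologicalSpace X] {o : Ordinal} (h : Order.IsSuccLimit o) :
    cbDeriv X o = ⋂ (o' : Ordinal) (_ : o' < o), cbDeriv X o' :=
  Ordinal.limitRecOn_limit _ _ _ _ h

lemma cbDeriv_preimage {X Y : Type*} [TopologicalSpace X] [TopologicalSpace Y]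
    (f : X → Y) (hopen : IsOpenMap f) (hsurj : Function.Surjective f) (o : Ordinal) :
    f ⁻¹' (cbDeriv Y o) ⊆ cbDeriv X o := by
  induction o using Ordinal.limitRecOn with
  | zero => simp [cbDeriv_zero]
  | add_one o ih =>
    rw [Ordinal.add_one_eq_succ, cbDeriv_succ, cbDeriv_succ]
    rintro x ⟨hx, hacc⟩
    refine ⟨ih hx, ?_⟩
    rw [accPt_iff_nhds] at hacc ⊢
    intro U hU
    obtain ⟨V, hVU, hVopen, hxV⟩ := mem_nhds_iff.mp hU
    obtain ⟨y, ⟨hyfV, hyD⟩, hyne⟩ := hacc (f '' V) ((hopen V hVopen).mem_nhds ⟨x, hxV, rfl⟩)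
    obtain ⟨x', hx'V, rfl⟩ := hyfV
    exact ⟨x', ⟨hVU hx'V, ih hyD⟩, fun h => hyne (by rw [h])⟩
  | limit o ho ih =>
    rw [cbDeriv_limit X ho, cbDeriv_limit Y ho]
    intro x hx
    simp only [Set.mem_preimage, Set.mem_iInter] at hx ⊢
    intro o' ho'
    exact ih o' ho' (hx o' ho')

/-- If `f : X → Y` is open and onto, the Cantor–Bendixson rank of `X` is at least that of `Y`:
whenever the `o`-th derivative of `Y` is nonempty, so is the `o`-th derivative of `X`. -/
theorem stmt_6 {X Y : Type*} [TopologicalSpace X] [TopologicalSpace Y]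
    [T2Space X] [T2Space Y] (f : X → Y) (hopen : IsOpenMap f)
    (hsurj : Function.Surjective f) :
    ∀ o : Ordinal, (cbDeriv Y o).Nonempty → (cbDeriv X o).Nonempty := by
  intro o ⟨y, hy⟩
  obtain ⟨x, rfl⟩ := hsurj y
  exact ⟨x, cbDeriv_preimage f hopen hsurj o hy⟩
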